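/- Given the supersymmetry variations δ₊½ acting on fields by δ₊½ψ₊^(+1/2) = [(∂₊BB⁻¹)∥, D^(+1/2)], δ₊½ψ₋^(-1/2) = -[Λ₋^(-1), B⁻¹D^(+1/2)B], and (δ₊½BB⁻¹)∥ = [ψ^(-1/2), D^(+1/2)], together with the analogous δ₋½ variations, the commutator of two δ₊½ flows closes on translations: [δ₊½, δ'₊½] = 2(ε·ε')∂₊ and [δ₋½, δ'₋½] = 2(ε̄·ε̄')∂₋ on-shell (using the fermion equations of motion), while [δ₊½, δ₋½] = δ_H is a gauge transformation with parameter ω = [D^(+1/2), D^(-1/2)] ∈ K_B^(0). -/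

import Mathlib

noncomputable section

namespace Stmt17

/-- commutator in the (Grassmann-enveloped) superalgebra. -/
def cm {R : Type*} [Ring R] (X Y : R) : R := X * Y - Y * X

/-- light-cone directional derivative on `ℝ²` (coordinates `(x⁺, x⁻)`). -/
def pd {R : Type*} [NormedRing R] [NormedAlgebra ℝ R]
    (v : ℝ × ℝ) (f : ℝ × ℝ → R) (x : ℝ × ℝ) : R :=
  fderiv ℝ f x v

section Helpers
variable {R : Type*} [NormedRing R] [NormedAlgebra ℝ R]

lemma pd_cm (χ : ℝ × ℝ → R) (P : R) (hχ : Differentiable ℝ χ) (v x : ℝ × ℝ) :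
    pd v (fun y => cm (χ y) P) x = cm (pd v χ x) P := by
  unfold pd cm
  have h1 : fderiv ℝ (fun y => χ y * P - P * χ y) x
      = fderiv ℝ (fun y => χ y * P) x - fderiv ℝ (fun y => P * χ y) x :=
    fderiv_sub ((hχ x).mul_const P) ((hχ x).const_mul P)
  rw [h1, fderiv_mul_const' (hχ x) P, fderiv_const_mul (hχ x) P]
  simp [smul_eq_mul]

lemma pd_neg (f : ℝ × ℝ → R) (v x : ℝ × ℝ) :
    pd v (fun y => -f y) x = -pd v f x := by
  unfold pd; rw [fderiv_fun_neg]; simp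

omit [NormedAlgebra ℝ R] in
lemma jacobi3 (a X Y : R) : cm (cm a X) Y - cm (cm a Y) X = cm a (cm X Y) := by
  simp only [cm]; noncomm_ring

omit [NormedAlgebra ℝ R] in
lemma jacobi2 (Λ a X : R) : cm Λ (cm a X) = cm (cm Λ a) X + cm a (cm Λ X) := by
  simp only [cm]; noncomm_ring

omit [NormedAlgebra ℝ R] in
lemma cm_central {s : R} (hs : ∀ x : R, s * x = x * s) (a Λ : R) :
    cm a (s * Λ) = s * cm a Λ := by
  simp only [cm, mul_sub]
  rw [← mul_assoc, ← hs a, mul_assoc, mul_assoc]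

lemma cm_smul (r : ℝ) (a x : R) : cm a (r • x) = r • cm a x := by
  simp [cm, mul_smul_comm, smul_mul_assoc, smul_sub]

omit [NormedAlgebra ℝ R] in
lemma cm_neg_right (a X : R) : cm a (-X) = -cm a X := by
  simp only [cm]; noncomm_ring

omit [NormedAlgebra ℝ R] in
lemma cm_neg_left (a X : R) : cm (-X) a = -cm X a := by
  simp only [cm]; noncomm_ring

omit [NormedAlgebra ℝ R] in
lemma cm_skew (X Y : R) : cm X Y = -cm Y X := by
  simp only [cm]; noncomm_ring

omit [NormedAlgebra ℝ R] in
lemma cm_zero_right (a : R) : cm a 0 = 0 := by simp [cm]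

omit [NormedAlgebra ℝ R] in
lemma cm_right_sub (c X Y : R) : cm c X - cm c Y = cm c (X - Y) := by
  simp only [cm]; noncomm_ring

end Helpers

/-- On-shell closure of the supersymmetry flows of the Pohlmeyer reduced
models (in the perturbative limit `B = 1 + b`).  The variations
`δ₊½(D)`: `δb = [χ⁻, D]` (i.e. `(δB B⁻¹)∥ = [ψ^(-1/2), D^(+1/2)]`),
`δψ₊ = [(∂₊b)∥, D]`, `δψ₋ = [Λ₋, [b, D]]` (linearization of `-[Λ₋, B⁻¹DB]`), and
`δ₋½(D̄)`: `δb = -[χ⁺, D̄]`, `δψ₋ = -[(∂₋b)∥, D̄]`, `δψ₊ = [Λ₊, [b, D̄]]`,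
satisfy, using the fermion equations of motion:
`[δ₊½, δ'₊½] = 2(ε·ε') ∂₊` and `[δ₋½, δ'₋½] = 2(ε̄·ε̄') ∂₋` on the fields
`ψ₊^(+1/2), ψ₋^(-1/2)`, while `[δ₊½, δ₋½] = δ_H` is a gauge transformation with
parameter `ω = [D^(+1/2), D^(-1/2)] ∈ K_B⁽⁰⁾`.
Here `s = ε·ε'` and `sb = ε̄·ε̄'` are the central Grassmann-even bilinears, with
`[D, D'] = 2(ε·ε')Λ₊` and `[D̄, D̄'] = -2(ε̄·ε̄')Λ₋`. -/

theorem stmt_17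
    (R : Type*) [NormedRing R] [NormedAlgebra ℝ R]
    (par : R →ₗ[ℝ] R)                      -- projection onto Im(ad Λ)
    (Λp Λm D D' Db Db' s sb ω : R)
    -- ε·ε' and ε̄·ε̄' are central
    (hs : ∀ x : R, s * x = x * s) (hsb : ∀ x : R, sb * x = x * sb)
    -- the kernel superalgebra relations for the supersymmetry parameters
    (hDD' : cm D D' = (2 : ℝ) • (s * Λp))
    (hDbDb' : cm Db Db' = -((2 : ℝ) • (sb * Λm)))
    (hω : ω = cm D Db)
    -- Λ± are central in the kernel: they commute with D, D', D̄, D̄' and ω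
    (hk1 : cm Λp D = 0) (hk2 : cm Λp D' = 0) (hk3 : cm Λp Db = 0) (hk4 : cm Λp Db' = 0)
    (hk5 : cm Λm D = 0) (hk6 : cm Λm D' = 0) (hk7 : cm Λm Db = 0) (hk8 : cm Λm Db' = 0)
    (hk9 : cm Λp ω = 0) (hk10 : cm Λm ω = 0)
    -- fields: b (Toda), ψ± (fermions), χ∓ = ψ^(∓1/2) (dressing potentials)
    (b ψp ψm χm χp : ℝ × ℝ → R)
    (hdb : Differentiable ℝ b) (hdψp : Differentiable ℝ ψp)
    (hdψm : Differentiable ℝ ψm) (hdχm : Differentiable ℝ χm)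
    (hdχp : Differentiable ℝ χp)
    -- ψ±^(±1/2) = ±[ψ^(∓1/2), Λ±]
    (hψp : ∀ x, ψp x = cm (χm x) Λp)
    (hψm : ∀ x, ψm x = -cm (χp x) Λm)
    -- the (linearized) fermion equations of motion
    (heom1 : ∀ x, pd (0, 1) ψp x = cm (ψm x) Λp)
    (heom2 : ∀ x, pd (1, 0) ψm x = cm Λm (ψp x))
    (heom3 : ∀ x, pd (1, 0) χp x = ψp x)
    (heom4 : ∀ x, pd (0, 1) χm x = ψm x)
    -- [Im(ad Λ), K] ⊆ Im(ad Λ): the projection `par` fixes brackets of the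
    -- image-valued fields with the kernel parameters
    (hpar : ∀ (x : ℝ × ℝ) (v : ℝ × ℝ) (χ : ℝ × ℝ → R) (P : R),
      (χ = χm ∨ χ = χp) → P ∈ ({D, D', Db, Db'} : Set R) →
      par (pd v (fun y => cm (χ y) P) x) = pd v (fun y => cm (χ y) P) x) :
    -- [δ₊½(D), δ₊½(D')] = 2(ε·ε')∂₊ on ψ₊ and on ψ₋
    (∀ x, cm (par (pd (1, 0) (fun y => cm (χm y) D) x)) D' -
        cm (par (pd (1, 0) (fun y => cm (χm y) D') x)) D =
      (2 : ℝ) • (s * pd (1, 0) ψp x)) ∧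
    (∀ x, cm Λm (cm (cm (χm x) D) D') - cm Λm (cm (cm (χm x) D') D) =
      (2 : ℝ) • (s * pd (1, 0) ψm x)) ∧
    -- [δ₋½(D̄), δ₋½(D̄')] = 2(ε̄·ε̄')∂₋ on ψ₋ and on ψ₊
    (∀ x, cm (par (pd (0, 1) (fun y => cm (χp y) Db) x)) Db' -
        cm (par (pd (0, 1) (fun y => cm (χp y) Db') x)) Db =
      (2 : ℝ) • (sb * pd (0, 1) ψm x)) ∧
    (∀ x, cm Λp (cm (-cm (χp x) Db) Db') - cm Λp (cm (-cm (χp x) Db') Db) =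
      (2 : ℝ) • (sb * pd (0, 1) ψp x)) ∧
    -- [δ₊½(D), δ₋½(D̄)] = δ_H, the gauge transformation with parameter ω = [D, D̄]
    (∀ x, cm Λp (cm (cm (χm x) D) Db) -
        cm (par (pd (1, 0) (fun y => -cm (χp y) Db) x)) D =
      cm ω (ψp x)) ∧
    (∀ x, -cm (par (pd (0, 1) (fun y => cm (χm y) D) x)) Db -
        cm Λm (cm (-cm (χp x) Db) D) =
      cm ω (ψm x)) := by
  have hDm : D ∈ ({D, D', Db, Db'} : Set R) := by simp
  have hD'm : D' ∈ ({D, D', Db, Db'} : Set R) := by simp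
  have hDbm : Db ∈ ({D, D', Db, Db'} : Set R) := by simp
  have hDb'm : Db' ∈ ({D, D', Db, Db'} : Set R) := by simp
  have hψpf : ψp = fun y => cm (χm y) Λp := funext hψp
  have hψmf : ψm = fun y => -cm (χp y) Λm := funext hψm
  have hpdψp : ∀ v x, pd v ψp x = cm (pd v χm x) Λp := by
    intro v x; rw [hψpf, pd_cm χm Λp hdχm]
  have hpdψm : ∀ v x, pd v ψm x = -cm (pd v χp x) Λm := by
    intro v x
    rw [hψmf, pd_neg (fun y => cm (χp y) Λm), pd_cm χp Λm hdχp]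
  refine ⟨?_, ?_, ?_, ?_, ?_, ?_⟩
  · -- part 1
    intro x
    rw [hpar x (1,0) χm D (Or.inl rfl) hDm, hpar x (1,0) χm D' (Or.inl rfl) hD'm,
      pd_cm χm D hdχm, pd_cm χm D' hdχm, jacobi3, hDD', cm_smul, cm_central hs,
      hpdψp]
  · -- part 2
    intro x
    rw [cm_right_sub, jacobi3, hDD', cm_smul, cm_central hs, cm_smul,
      cm_central hs, ← hψp x, heom2]
  · -- part 3
    intro x
    rw [hpar x (0,1) χp Db (Or.inr rfl) hDbm, hpar x (0,1) χp Db' (Or.inr rfl) hDb'm,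
      pd_cm χp Db hdχp, pd_cm χp Db' hdχp, jacobi3, hDbDb', cm_neg_right, cm_smul,
      cm_central hsb, hpdψm]
    simp [mul_neg]
  · -- part 4
    intro x
    rw [cm_neg_left, cm_neg_left, cm_neg_right (Λp), cm_neg_right (Λp),
      neg_sub_neg, cm_right_sub]
    have h1 : cm (cm (χp x) Db') Db - cm (cm (χp x) Db) Db'
        = -cm (χp x) (cm Db Db') := by
      rw [← jacobi3]; noncomm_ring
    rw [h1, hDbDb']
    simp only [cm_neg_right, neg_neg]
    rw [cm_smul, cm_smul, cm_central hsb, cm_central hsb, heom1, hψm x,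
      cm_neg_left, cm_skew (cm (χp x) Λm) Λp, neg_neg]
  · -- part 5
    intro x
    have h2 : pd (1,0) (fun y => -cm (χp y) Db) x = -cm (ψp x) Db := by
      rw [pd_neg (fun y => cm (χp y) Db), pd_cm χp Db hdχp, heom3]
    have h3 : par (pd (1,0) (fun y => -cm (χp y) Db) x)
        = -cm (ψp x) Db := by
      have := hpar x (1,0) χp Db (Or.inr rfl) hDbm
      have h4 : pd (1,0) (fun y => -cm (χp y) Db) x
          = -(pd (1,0) (fun y => cm (χp y) Db) x) :=
        pd_neg (fun y => cm (χp y) Db) (1,0) x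
      rw [h4, map_neg, this, pd_cm χp Db hdχp, heom3]
    rw [h3, jacobi2 Λp (cm (χm x) D) Db, hk3, cm_zero_right, add_zero,
      jacobi2 Λp (χm x) D, hk1, cm_zero_right, add_zero,
      cm_skew Λp (χm x), ← hψp x, cm_neg_left, cm_neg_left, cm_neg_left,
      sub_neg_eq_add, hω, cm_skew (cm D Db) (ψp x), ← jacobi3]
    noncomm_ring
  · -- part 6
    intro x
    have h5 : par (pd (0,1) (fun y => cm (χm y) D) x) = cm (ψm x) D := by
      rw [hpar x (0,1) χm D (Or.inl rfl) hDm, pd_cm χm D hdχm, heom4]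
    rw [h5, cm_neg_left, cm_neg_right Λm, sub_neg_eq_add,
      jacobi2 Λm (cm (χp x) Db) D, hk5, cm_zero_right, add_zero,
      jacobi2 Λm (χp x) Db, hk7, cm_zero_right, add_zero,
      cm_skew Λm (χp x), cm_neg_left]
    simp only [hψm, cm_neg_left, cm_neg_right, neg_neg, ← sub_eq_add_neg]
    rw [hω, jacobi3, cm_skew (cm D Db) (cm (χp x) Λm), neg_neg]

end Stmt17
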